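/- For all real numbers y with 0 ≤ y < 1, the inequality (3 - 2√2·√y)² / (1 - y) ≥ 1 holds, with equality if and only if y = 8/9. -/
import Mathlib

/-- For all real `y` with `0 ≤ y < 1`, `(3 - 2√2·√y)² / (1 - y) ≥ 1`,
with equality iff `y = 8/9`. -/
theorem stmt_0 (y : ℝ) (h0 : 0 ≤ y) (h1 : y < 1) :
    1 ≤ (3 - 2 * Real.sqrt 2 * Real.sqrt y) ^ 2 / (1 - y) ∧
      ((3 - 2 * Real.sqrt 2 * Real.sqrt y) ^ 2 / (1 - y) = 1 ↔ y = 8 / 9) := by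
  set s := Real.sqrt 2 * Real.sqrt y with hsdef
  have hs0 : 0 ≤ s := mul_nonneg (Real.sqrt_nonneg _) (Real.sqrt_nonneg _)
  have hs2 : s ^ 2 = 2 * y := by
    rw [hsdef, mul_pow, Real.sq_sqrt (by norm_num : (2:ℝ) ≥ 0), Real.sq_sqrt h0]
  have hden : 0 < 1 - y := by linarith
  have key : 3 - 2 * Real.sqrt 2 * Real.sqrt y = 3 - 2 * s := by rw [hsdef]; ring
  rw [key]
  constructor
  · rw [le_div_iff₀ hden]
    nlinarith [sq_nonneg (3 * s - 4)]
  · rw [div_eq_one_iff_eq (ne_of_gt hden)]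
    constructor
    · intro h
      have : s = 4 / 3 := by nlinarith [sq_nonneg (3 * s - 4)]
      nlinarith
    · intro h
      have : s = 4 / 3 := by nlinarith [sq_nonneg (3 * s - 4)]
      nlinarith
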